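/- Let G be a finite simple graph with vertex weights a' : V → ℝ and edge weights w, let γ ∈ [0,1], and define transformed edge weights w'({u,v}) = γ·(a'(u) + a'(v)) + 2·(1−γ)·w({u,v}). For every path p = v_0, v_1, ..., v_k in G with k ≥ 1 (all vertices distinct), one has (1/2)·( Σ_{i=0}^{k−1} w'(v_i, v_{i+1}) − γ·a'(v_0) − γ·a'(v_k) ) = γ · Σ_{i=1}^{k−1} a'(v_i) + (1−γ) · Σ_{i=0}^{k−1} w(v_i, v_{i+1}); that is, half the transformed path cost, after subtracting γ times the vertex weights of the two endpoints, equals the CA-CC objective of the path viewed as a team whose skill holders are exactly its two endpoints and whose connectors are its interior vertices. -/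
import Mathlib

lemma transformed_path_cost_aux {V : Type*} (G : SimpleGraph V)
    (a' : V → ℝ) (w : Sym2 V → ℝ) (γ : ℝ)
    (w' : Sym2 V → ℝ)
    (hw' : ∀ u v : V, w' s(u, v) = γ * (a' u + a' v) + 2 * (1 - γ) * w s(u, v)) :
    ∀ {u v : V} (p : G.Walk u v), 1 ≤ p.length →
      (p.edges.map w').sum = γ * (a' u + a' v)
        + 2 * γ * ((p.support.tail.dropLast).map a').sum
        + 2 * (1 - γ) * (p.edges.map w).sum := by
  intro u v p
  induction p with
  | nil => simp
  | @cons u x v h q ih =>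
    cases q with
    | nil =>
      intro _
      simp [hw']
    | @cons x y v h2 r =>
      intro _
      have hih := ih (by simp)
      have hr : r.support ≠ [] := r.support_ne_nil
      simp only [SimpleGraph.Walk.edges_cons, SimpleGraph.Walk.support_cons,
        List.map_cons, List.sum_cons, List.tail_cons] at hih ⊢
      rw [List.dropLast_cons_of_ne_nil hr, hih, hw', List.map_cons, List.sum_cons]
      ring

/-- For a path `p = v₀, v₁, …, v_k` (k ≥ 1) in `G`, half of the
transformed path cost minus `γ` times the endpoint weights equals the CA-CC
objective of the path: `γ·Σ_{interior} a' + (1-γ)·Σ_{edges} w`. -/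
theorem transformed_path_cost_CA_CC {V : Type*} (G : SimpleGraph V)
    (a' : V → ℝ) (w : Sym2 V → ℝ) (γ : ℝ) (hγ : γ ∈ Set.Icc (0 : ℝ) 1)
    (w' : Sym2 V → ℝ)
    (hw' : ∀ u v : V, w' s(u, v) = γ * (a' u + a' v) + 2 * (1 - γ) * w s(u, v))
    {u v : V} (p : G.Walk u v) (hp : p.IsPath) (hk : 1 ≤ p.length) :
    (1 / 2) * ((p.edges.map w').sum - γ * a' u - γ * a' v) =
      γ * ((p.support.tail.dropLast).map a').sum
        + (1 - γ) * (p.edges.map w).sum := by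
  rw [transformed_path_cost_aux G a' w γ w' hw' p hk]
  ring
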